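/- The FBG transform is inverted by the formula (26): for every continuous compactly supported u : ℝ² → ℂ and almost every x ∈ ℝ², u(x) = (2π)⁻¹ ∫_{[0,2π]²} e^{i η·x} û(x − [x]; η) dη, where û(y;η) = (2π)⁻¹ Σ_{α∈ℤ²} e^{-i η·(y+α)} u(y+α) and [x] = (⌊x₁⌋, ⌊x₂⌋) is the componentwise integer part of x. -/

import Mathlib

open MeasureTheory Complex

/-- The pointwise Floquet–Bloch–Gelfand transform of a function `u : ℝ² → ℂ`,
evaluated at the cell variable `y` and dual variable `η`:
`û(y;η) = (2π)⁻¹ Σ_{α∈ℤ²} e^{-i η·(y+α)} u(y+α)`. -/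
noncomputable def fbgTransform (u : ℝ × ℝ → ℂ) (y η : ℝ × ℝ) : ℂ :=
  (2 * Real.pi : ℂ)⁻¹ *
    ∑' α : ℤ × ℤ,
      Complex.exp (-(Complex.I * (η.1 * (y.1 + (α.1 : ℝ)) + η.2 * (y.2 + (α.2 : ℝ))))) *
        u (y.1 + (α.1 : ℝ), y.2 + (α.2 : ℝ))

lemma integral_exp_int (k : ℤ) :
    ∫ η in Set.Icc (0:ℝ) (2 * Real.pi), Complex.exp (Complex.I * (k:ℂ) * (η:ℂ)) =
      if k = 0 then (2 * Real.pi : ℂ) else 0 := by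
  rw [MeasureTheory.integral_Icc_eq_integral_Ioc,
    ← intervalIntegral.integral_of_le (by positivity : (0:ℝ) ≤ 2 * Real.pi)]
  by_cases hk : k = 0
  · subst hk
    simp
  · rw [if_neg hk]
    have hc : (Complex.I * (k:ℂ)) ≠ 0 :=
      mul_ne_zero Complex.I_ne_zero (by exact_mod_cast hk)
    rw [integral_exp_mul_complex hc]
    have h1 : Complex.exp (Complex.I * (k:ℂ) * ((2 * Real.pi : ℝ) : ℂ)) = 1 := by
      rw [← Complex.exp_int_mul_two_pi_mul_I k]
      congr 1
      push_cast
      ring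
    rw [h1]
    simp

/-- The FBG transform is inverted by formula (26): for every
continuous compactly supported `u : ℝ² → ℂ` and almost every `x ∈ ℝ²`,
`u(x) = (2π)⁻¹ ∫_{[0,2π]²} e^{i η·x} û(x − ⌊x⌋; η) dη`. -/
theorem fbg_inversion (u : ℝ × ℝ → ℂ) (hu : Continuous u) (hsupp : HasCompactSupport u) :
    ∀ᵐ x : ℝ × ℝ ∂volume,
      u x = (2 * Real.pi : ℂ)⁻¹ *
        ∫ η in (Set.Icc (0:ℝ) (2 * Real.pi) ×ˢ Set.Icc (0:ℝ) (2 * Real.pi)),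
          Complex.exp (Complex.I * (η.1 * x.1 + η.2 * x.2)) *
            fbgTransform u (x.1 - (⌊x.1⌋ : ℝ), x.2 - (⌊x.2⌋ : ℝ)) η := by
  refine ae_of_all _ fun x => ?_
  set m₁ : ℤ := ⌊x.1⌋ with hm₁
  set m₂ : ℤ := ⌊x.2⌋ with hm₂
  set y₁ : ℝ := x.1 - m₁ with hy₁
  set y₂ : ℝ := x.2 - m₂ with hy₂
  obtain ⟨r, hr⟩ := hsupp.isBounded.subset_closedBall 0
  set N : ℤ := ⌈r + |y₁| + |y₂|⌉ with hN
  set s : Finset (ℤ × ℤ) := insert (m₁, m₂) (Finset.Icc (-N, -N) (N, N)) with hs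
  have hout : ∀ α : ℤ × ℤ, α ∉ s → u (y₁ + (α.1:ℝ), y₂ + (α.2:ℝ)) = 0 := by
    intro α hα
    by_contra h0
    apply hα
    have hmem : (y₁ + (α.1:ℝ), y₂ + (α.2:ℝ)) ∈ Metric.closedBall (0:ℝ×ℝ) r :=
      hr (subset_tsupport u h0)
    rw [Metric.mem_closedBall, Prod.dist_eq] at hmem
    simp only [Prod.fst_zero, Prod.snd_zero, Real.dist_eq, sub_zero] at hmem
    have h1 : |y₁ + (α.1:ℝ)| ≤ r := le_trans (le_max_left _ _) hmem
    have h2 : |y₂ + (α.2:ℝ)| ≤ r := le_trans (le_max_right _ _) hmem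
    have hb1 : |(α.1:ℝ)| ≤ r + |y₁| + |y₂| := by
      have h3 := abs_add_le (y₁ + (α.1:ℝ)) (-y₁)
      rw [abs_neg, show y₁ + (α.1:ℝ) + -y₁ = (α.1:ℝ) by ring] at h3
      have := abs_nonneg y₂
      linarith
    have hb2 : |(α.2:ℝ)| ≤ r + |y₁| + |y₂| := by
      have h3 := abs_add_le (y₂ + (α.2:ℝ)) (-y₂)
      rw [abs_neg, show y₂ + (α.2:ℝ) + -y₂ = (α.2:ℝ) by ring] at h3
      have := abs_nonneg y₁
      linarith
    have hNr : r + |y₁| + |y₂| ≤ (N:ℝ) := Int.le_ceil _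
    rw [abs_le] at hb1 hb2
    refine Finset.mem_insert_of_mem (Finset.mem_Icc.mpr ⟨⟨?_, ?_⟩, ⟨?_, ?_⟩⟩)
    · exact_mod_cast (by push_cast; linarith : ((-N : ℤ) : ℝ) ≤ (α.1:ℝ))
    · exact_mod_cast (by push_cast; linarith : ((-N : ℤ) : ℝ) ≤ (α.2:ℝ))
    · exact_mod_cast (by push_cast; linarith : (α.1:ℝ) ≤ ((N : ℤ) : ℝ))
    · exact_mod_cast (by push_cast; linarith : (α.2:ℝ) ≤ ((N : ℤ) : ℝ))
  have hm : (m₁, m₂) ∈ s := Finset.mem_insert_self _ _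
  have hx1 : x.1 = y₁ + (m₁:ℝ) := by rw [hy₁]; ring
  have hx2 : x.2 = y₂ + (m₂:ℝ) := by rw [hy₂]; ring
  have hfun : (fun η : ℝ × ℝ =>
      Complex.exp (Complex.I * (η.1 * x.1 + η.2 * x.2)) *
        fbgTransform u (x.1 - (⌊x.1⌋:ℝ), x.2 - (⌊x.2⌋:ℝ)) η) =
      fun η : ℝ × ℝ => (2 * Real.pi : ℂ)⁻¹ *
        ∑ α ∈ s, (Complex.exp (Complex.I * ((m₁ - α.1 : ℤ):ℂ) * ((η.1:ℝ):ℂ)) *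
            u (y₁ + (α.1:ℝ), y₂ + (α.2:ℝ))) *
          Complex.exp (Complex.I * ((m₂ - α.2 : ℤ):ℂ) * ((η.2:ℝ):ℂ)) := by
    funext η
    rw [fbgTransform]
    rw [tsum_eq_sum (s := s) (fun α hα => by
      rw [show (y₁ + (α.1:ℝ), y₂ + (α.2:ℝ)) = ((y₁, y₂).1 + (α.1:ℝ), (y₂:ℝ) + (α.2:ℝ)) from rfl] at *
      rw [hout α hα, mul_zero])]
    rw [mul_left_comm, Finset.mul_sum]
    congr 1
    refine Finset.sum_congr rfl fun α _ => ?_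
    have hexp : Complex.exp (Complex.I * (η.1 * x.1 + η.2 * x.2)) *
        Complex.exp (-(Complex.I * (η.1 * (y₁ + (α.1:ℝ)) + η.2 * (y₂ + (α.2:ℝ))))) =
        Complex.exp (Complex.I * ((m₁ - α.1 : ℤ):ℂ) * ((η.1:ℝ):ℂ)) *
          Complex.exp (Complex.I * ((m₂ - α.2 : ℤ):ℂ) * ((η.2:ℝ):ℂ)) := by
      rw [← Complex.exp_add, ← Complex.exp_add]
      congr 1
      rw [hx1, hx2]
      push_cast
      ring
    calc Complex.exp (Complex.I * (η.1 * x.1 + η.2 * x.2)) *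
          (Complex.exp (-(Complex.I * (η.1 * (y₁ + (α.1:ℝ)) + η.2 * (y₂ + (α.2:ℝ))))) *
            u (y₁ + (α.1:ℝ), y₂ + (α.2:ℝ)))
        = (Complex.exp (Complex.I * (η.1 * x.1 + η.2 * x.2)) *
            Complex.exp (-(Complex.I * (η.1 * (y₁ + (α.1:ℝ)) + η.2 * (y₂ + (α.2:ℝ)))))) *
            u (y₁ + (α.1:ℝ), y₂ + (α.2:ℝ)) := by ring
      _ = _ := by rw [hexp]; ring
  rw [hfun, integral_const_mul]
  have hint : ∀ α ∈ s, IntegrableOn (fun η : ℝ × ℝ =>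
      (Complex.exp (Complex.I * ((m₁ - α.1 : ℤ):ℂ) * ((η.1:ℝ):ℂ)) *
          u (y₁ + (α.1:ℝ), y₂ + (α.2:ℝ))) *
        Complex.exp (Complex.I * ((m₂ - α.2 : ℤ):ℂ) * ((η.2:ℝ):ℂ)))
      (Set.Icc (0:ℝ) (2*Real.pi) ×ˢ Set.Icc (0:ℝ) (2*Real.pi)) volume := by
    intro α _
    exact ContinuousOn.integrableOn_compact (isCompact_Icc.prod isCompact_Icc) (by fun_prop : Continuous _).continuousOn
  rw [MeasureTheory.integral_finset_sum s hint]
  have hterm : ∀ α ∈ s,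
      (∫ η in (Set.Icc (0:ℝ) (2*Real.pi) ×ˢ Set.Icc (0:ℝ) (2*Real.pi)),
          (Complex.exp (Complex.I * ((m₁ - α.1 : ℤ):ℂ) * ((η.1:ℝ):ℂ)) *
              u (y₁ + (α.1:ℝ), y₂ + (α.2:ℝ))) *
            Complex.exp (Complex.I * ((m₂ - α.2 : ℤ):ℂ) * ((η.2:ℝ):ℂ))) =
      ((if (m₁ - α.1 : ℤ) = 0 then (2*Real.pi:ℂ) else 0) *
          u (y₁ + (α.1:ℝ), y₂ + (α.2:ℝ))) *
        (if (m₂ - α.2 : ℤ) = 0 then (2*Real.pi:ℂ) else 0) := by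
    intro α _
    rw [Measure.volume_eq_prod, ← Measure.prod_restrict]
    rw [MeasureTheory.integral_prod_mul
      (f := fun t : ℝ => Complex.exp (Complex.I * ((m₁ - α.1 : ℤ):ℂ) * ((t:ℝ):ℂ)) *
          u (y₁ + (α.1:ℝ), y₂ + (α.2:ℝ)))
      (g := fun t : ℝ => Complex.exp (Complex.I * ((m₂ - α.2 : ℤ):ℂ) * ((t:ℝ):ℂ)))]
    rw [MeasureTheory.integral_mul_const, integral_exp_int, integral_exp_int]
  rw [Finset.sum_congr rfl hterm]
  rw [Finset.sum_eq_single_of_mem (m₁, m₂) hm (fun α _ hne => by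
    by_cases h1 : m₁ - α.1 = 0
    · have h2 : m₂ - α.2 ≠ 0 := fun h2 =>
        hne (Prod.ext (sub_eq_zero.mp h1).symm (sub_eq_zero.mp h2).symm)
      rw [if_neg h2, mul_zero]
    · rw [if_neg h1, zero_mul, zero_mul])]
  have hux : (y₁ + ((m₁, m₂).1:ℝ), y₂ + ((m₁, m₂).2:ℝ)) = x := Prod.ext hx1.symm hx2.symm
  rw [hux]
  simp only [sub_self, if_pos rfl, if_true]
  have hπ : (2 * Real.pi : ℂ) ≠ 0 := by
    have : (Real.pi : ℂ) ≠ 0 := Complex.ofReal_ne_zero.mpr Real.pi_ne_zero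
    simp [this]
  field_simp
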